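/- Suppose (λ, c_A, c_B) is a stationary point of the Lagrangian for maximizing the largest eigenvalue of the symmetrically tilted CHSH Bell operator, i.e., satisfies ∂_{c_A} q = 0 and ∂_{c_B} q = 0 for the characteristic polynomial q(λ, c_A, c_B, α) of the symmetric (α=β) case, with c_A, c_B ∈ [0,1) and α ∈ [0,1). Then c_A = c_B. -/
import Mathlib

/-- at a stationary point of the Lagrangian for maximizing the
largest eigenvalue of the symmetrically tilted (α = β) CHSH Bell operator —
i.e., a common solution of the stationarity conditions, which after reduction
read `(α²−4c_A)(1+c_B) + 2α²c_A + α²λ = 0` and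
`(α²−4c_B)(1+c_A) + 2α²c_B + α²λ = 0` — with `c_A, c_B ∈ [0,1)` and
`α ∈ [0,1)`, one has `c_A = c_B`. -/
theorem stationary_point_symmetric (α lam cA cB : ℝ)
    (hα : α ∈ Set.Ico (0:ℝ) 1)
    (hcA : cA ∈ Set.Ico (0:ℝ) 1) (hcB : cB ∈ Set.Ico (0:ℝ) 1)
    (h1 : (α ^ 2 - 4 * cA) * (1 + cB) + 2 * α ^ 2 * cA + α ^ 2 * lam = 0)
    (h2 : (α ^ 2 - 4 * cB) * (1 + cA) + 2 * α ^ 2 * cB + α ^ 2 * lam = 0) :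
    cA = cB := by
  have key : (cA - cB) * (α ^ 2 - 4) = 0 := by nlinarith [h1, h2]
  have hα2 : α ^ 2 - 4 ≠ 0 := by nlinarith [hα.1, hα.2]
  have := mul_eq_zero.mp key
  rcases this with h | h
  · linarith
  · exact absurd h hα2
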